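/- Let ε > 0, k ≥ 1, and a ≥ 2 + 4/(ε(k+1)). Let H be a graph on an vertices such that every two disjoint vertex sets of size at least εn are joined by an edge. Then for any pairwise disjoint sets A₁, …, A_{k+1} ⊆ V(H), each of size at least εan, there is a path (x₁, …, x_n) in H such that x_i ∈ A_j whenever j ≡ i (mod k+1). -/

import Mathlib

open SimpleGraph Finset

/-- `H` has a copy (an injective graph homomorphism image) in `G`. -/
def Copy {V W : Type*} (H : SimpleGraph W) (G : SimpleGraph V) : Prop :=
  ∃ f : H →g G, Function.Injective f

/-- `G → H`: every red/blue colouring of the edges of `G` (red edges given by a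
subgraph `R ≤ G`, blue edges by `G \ R`) contains a monochromatic copy of `H`. -/
def Arrow {V W : Type*} (G : SimpleGraph V) (H : SimpleGraph W) : Prop :=
  ∀ R : SimpleGraph V, R ≤ G → Copy H R ∨ Copy H (G \ R)

/-- The size-Ramsey number `r̂(H)`. -/
noncomputable def sizeRamsey {W : Type*} (H : SimpleGraph W) : ℕ :=
  sInf {m | ∃ (N : ℕ) (G : SimpleGraph (Fin N)), Arrow G H ∧ G.edgeSet.ncard = m}

/-- The (2-colour) Ramsey number `r(H)`. -/
noncomputable def ramseyNum {W : Type*} (H : SimpleGraph W) : ℕ :=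
  sInf {N | Arrow (⊤ : SimpleGraph (Fin N)) H}

/-- The `k`-th power `H^k` of a graph: edges between distinct vertices at distance at most `k`. -/
def gpow {V : Type*} (H : SimpleGraph V) (k : ℕ) : SimpleGraph V where
  Adj u v := u ≠ v ∧ ∃ p : H.Walk u v, p.length ≤ k
  symm := ⟨by rintro u v ⟨h, p, hp⟩; exact ⟨h.symm, p.reverse, by simpa using hp⟩⟩
  loopless := ⟨by rintro u ⟨h, -⟩; exact h rfl⟩

/-- The complete blow-up of `H` where each vertex is replaced by a clique of size `m`. -/
def blowup {V : Type*} (H : SimpleGraph V) (m : ℕ) : SimpleGraph (V × Fin m) where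
  Adj x y := (x.1 = y.1 ∧ x.2 ≠ y.2) ∨ H.Adj x.1 y.1
  symm := ⟨by rintro x y (⟨h1, h2⟩ | h); exacts [Or.inl ⟨h1.symm, h2.symm⟩, Or.inr h.symm]⟩
  loopless := ⟨by rintro x (⟨-, h⟩ | h); exacts [h rfl, H.irrefl h]⟩

/-- `P_n^k`, the `k`-th power of the path on `n` vertices. -/
def pathPow (n k : ℕ) : SimpleGraph (Fin n) where
  Adj i j := i ≠ j ∧ i.val - j.val ≤ k ∧ j.val - i.val ≤ k
  symm := ⟨by rintro i j ⟨h, h1, h2⟩; exact ⟨h.symm, h2, h1⟩⟩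
  loopless := ⟨by rintro i ⟨h, -⟩; exact h rfl⟩

/-- `C_n^k`, the `k`-th power of the cycle on `n` vertices. -/
def cyclePow (n k : ℕ) : SimpleGraph (ZMod n) where
  Adj i j := i ≠ j ∧ ∃ d : ℕ, 1 ≤ d ∧ d ≤ k ∧ (i = j + (d : ZMod n) ∨ j = i + (d : ZMod n))
  symm := ⟨by rintro i j ⟨h, d, h1, h2, h3⟩; exact ⟨h.symm, d, h1, h2, h3.symm⟩⟩
  loopless := ⟨by rintro i ⟨h, -⟩; exact h rfl⟩

section Stmt8Aux

set_option linter.unusedSectionVars false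
set_option linter.unusedVariables false
set_option maxHeartbeats 1000000

section aux
variable {V : Type*} [DecidableEq V]

lemma image_last (m : ℕ) (x : Fin (m+1) → V) :
    (Finset.univ.image x) =
      insert (x (Fin.last m)) (Finset.univ.image (fun j : Fin m => x j.castSucc)) := by
  ext v
  simp only [Finset.mem_image, Finset.mem_insert, Finset.mem_univ, true_and]
  constructor
  · rintro ⟨j, rfl⟩
    rcases Fin.eq_castSucc_or_eq_last j with ⟨j', rfl⟩ | rfl
    · exact Or.inr ⟨j', rfl⟩
    · exact Or.inl rfl
  · rintro (rfl | ⟨j, rfl⟩)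
    exacts [⟨Fin.last m, rfl⟩, ⟨j.castSucc, rfl⟩]

lemma image_snoc (m : ℕ) (x : Fin m → V) (u : V) :
    Finset.univ.image (Fin.snoc x u : Fin (m+1) → V) = insert u (Finset.univ.image x) := by
  rw [image_last]
  simp [Fin.snoc_last, Fin.snoc_castSucc]

lemma snoc_injective {m : ℕ} (x : Fin m → V) (u : V) (hx : Function.Injective x)
    (hu : ∀ j, x j ≠ u) : Function.Injective (Fin.snoc x u : Fin (m+1) → V) := by
  intro a b hab
  rcases Fin.eq_castSucc_or_eq_last a with ⟨a', rfl⟩ | rfl <;>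
    rcases Fin.eq_castSucc_or_eq_last b with ⟨b', rfl⟩ | rfl
  · rw [Fin.snoc_castSucc, Fin.snoc_castSucc] at hab
    exact congrArg Fin.castSucc (hx hab)
  · rw [Fin.snoc_castSucc, Fin.snoc_last] at hab; exact absurd hab (hu a')
  · rw [Fin.snoc_last, Fin.snoc_castSucc] at hab; exact absurd hab.symm (hu b')
  · rfl

lemma snoc_mk_lt {m : ℕ} (x : Fin m → V) (u : V) (j : ℕ) (h : j < m) (h' : j < m+1) :
    (Fin.snoc x u : Fin (m+1) → V) ⟨j, h'⟩ = x ⟨j, h⟩ := by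
  have e : (⟨j, h'⟩ : Fin (m+1)) = Fin.castSucc ⟨j, h⟩ := rfl
  rw [e, Fin.snoc_castSucc]

lemma snoc_mk_last {m : ℕ} (x : Fin m → V) (u : V) (h' : m < m+1) :
    (Fin.snoc x u : Fin (m+1) → V) ⟨m, h'⟩ = u := by
  have e : (⟨m, h'⟩ : Fin (m+1)) = Fin.last m := rfl
  rw [e, Fin.snoc_last]

end aux

lemma fin_mk_add_one (k j : ℕ) :
    (⟨j % (k+1), Nat.mod_lt _ (by omega)⟩ : Fin (k+1)) + 1
      = ⟨(j+1) % (k+1), Nat.mod_lt _ (by omega)⟩ := by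
  apply Fin.ext
  simp only [Fin.add_def, Fin.val_one']
  conv_rhs => rw [Nat.add_mod]

lemma fin_ne_add_one {k : ℕ} (hk : 1 ≤ k) (c : Fin (k+1)) : c + 1 ≠ c := by
  intro h
  have hv := congrArg Fin.val h
  simp only [Fin.add_def, Fin.val_one'] at hv
  have h1 : 1 % (k+1) = 1 := Nat.mod_eq_of_lt (by omega)
  rw [h1] at hv
  rcases Nat.lt_or_ge (c.val + 1) (k+1) with h2 | h2
  · rw [Nat.mod_eq_of_lt h2] at hv; omega
  · have hc : c.val = k := by have := c.isLt; omega
    rw [hc] at hv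
    simp [Nat.mod_self] at hv
    omega

lemma arith_key {ε a n kk : ℝ} (hε : 0 < ε) (hkk : 0 < kk)
    (ha : 2 + 4 / (ε * kk) ≤ a) (hn : 0 ≤ n) :
    2 * (ε * n) + 4 * n / kk ≤ ε * a * n := by
  have h4 : 4 / (ε * kk) * (ε * n) = 4 * n / kk := by
    field_simp
  have h5 := mul_le_mul_of_nonneg_right ha (mul_nonneg hε.le hn)
  nlinarith [h4, h5]

lemma count_bound {V : Type*} [DecidableEq V] (k n i : ℕ) (hn : 1 ≤ n) (hi : i ≤ n)
    (A : Fin (k+1) → Finset V)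
    (hdisj : ∀ c c' : Fin (k+1), c ≠ c' → Disjoint (A c) (A c'))
    (x : Fin i → V) (hinj : Function.Injective x)
    (hmem : ∀ j : Fin i, x j ∈ A ⟨(j:ℕ) % (k+1), Nat.mod_lt _ (by omega)⟩)
    (c : Fin (k+1)) :
    (Finset.univ.image x ∩ A c).card ≤ (n + k) / (k+1) := by
  classical
  have hsub : Finset.univ.image x ∩ A c ⊆
      (Finset.univ.filter (fun j : Fin i => (j:ℕ) % (k+1) = c.val)).image x := by
    intro v hv
    simp only [Finset.mem_inter, Finset.mem_image, Finset.mem_univ, true_and] at hv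
    obtain ⟨⟨j, rfl⟩, hvA⟩ := hv
    have hceq : (⟨(j:ℕ) % (k+1), Nat.mod_lt _ (by omega)⟩ : Fin (k+1)) = c := by
      by_contra hne
      exact (Finset.disjoint_left.1 (hdisj _ _ hne) (hmem j) hvA)
    simp only [Finset.mem_image, Finset.mem_filter, Finset.mem_univ, true_and]
    exact ⟨j, by rw [← hceq], rfl⟩
  refine le_trans (Finset.card_le_card hsub) (le_trans Finset.card_image_le ?_)
  have hmain := Finset.card_le_card_of_injOn (fun j : Fin i => (j:ℕ) / (k+1))
    (s := Finset.univ.filter fun j : Fin i => (j:ℕ) % (k+1) = c.val)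
    (t := Finset.range ((n + k)/(k+1))) ?_ ?_
  · simpa using hmain
  · intro j hj
    simp only [Finset.mem_coe, Finset.mem_range]
    have hj1 : (j:ℕ) < i := j.isLt
    have h1 : (j:ℕ) ≤ n - 1 := by omega
    calc (j:ℕ)/(k+1) ≤ (n-1)/(k+1) := Nat.div_le_div_right h1
    _ < (n-1)/(k+1) + 1 := Nat.lt_succ_self _
    _ = (n - 1 + (k+1))/(k+1) := (Nat.add_div_right _ (by omega)).symm
    _ = (n + k)/(k+1) := by congr 1; omega
  · intro j1 h1 j2 h2 hdiv
    simp only [Finset.coe_filter, Set.mem_setOf_eq, Finset.mem_univ, true_and] at h1 h2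
    have hdiv2 : (j1:ℕ)/(k+1) = (j2:ℕ)/(k+1) := hdiv
    have : (j1:ℕ) = (j2:ℕ) := by
      calc (j1:ℕ) = (k+1)*((j1:ℕ)/(k+1)) + (j1:ℕ)%(k+1) := (Nat.div_add_mod _ _).symm
      _ = (k+1)*((j2:ℕ)/(k+1)) + (j2:ℕ)%(k+1) := by rw [hdiv2, h1, h2]
      _ = (j2:ℕ) := Nat.div_add_mod _ _
    exact Fin.ext this

lemma small_side {N : ℕ} {H : SimpleGraph (Fin N)} {ε : ℝ} {n : ℕ}
    (hjoin : ∀ S T : Finset (Fin N), Disjoint S T →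
      ε * n ≤ (S.card : ℝ) → ε * n ≤ (T.card : ℝ) → ∃ u ∈ S, ∃ v ∈ T, H.Adj u v)
    {S T : Finset (Fin N)} (hd : Disjoint S T) (hS : ε * n ≤ (S.card:ℝ))
    (hno : ∀ s ∈ S, ∀ t ∈ T, ¬ H.Adj s t) : (T.card : ℝ) < ε * n := by
  by_contra h
  push_neg at h
  obtain ⟨u, hu, v, hv, hadj⟩ := hjoin S T hd hS h
  exact hno u hu v hv hadj

lemma push_keepU (k a n : ℕ) (hk : 1 ≤ k) (ε : ℝ) (hε : 0 < ε)
    (ha : 2 + 4 / (ε * (k + 1)) ≤ (a : ℝ))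
    (H : SimpleGraph (Fin (a * n)))
    (hjoin : ∀ S T : Finset (Fin (a * n)), Disjoint S T →
      ε * n ≤ (S.card : ℝ) → ε * n ≤ (T.card : ℝ) → ∃ u ∈ S, ∃ v ∈ T, H.Adj u v)
    (A : Fin (k + 1) → Finset (Fin (a * n)))
    (hdisj : ∀ i j, i ≠ j → Disjoint (A i) (A j))
    (hsize : ∀ i, ε * a * n ≤ ((A i).card : ℝ))
    (hkn : k + 1 ≤ n)
    (i : ℕ) (hilt : i < n) (x : Fin i → Fin (a*n)) (D : Finset (Fin (a*n)))
    (u : Fin (a*n))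
    (hu : u ∈ (A ⟨i % (k+1), Nat.mod_lt _ (by omega)⟩ \ D) \ Finset.univ.image x)
    (hinj' : Function.Injective (Fin.snoc x u : Fin (i+1) → Fin (a*n)))
    (hmem' : ∀ j : Fin (i+1),
      (Fin.snoc x u : Fin (i+1) → Fin (a*n)) j ∈ A ⟨(j:ℕ) % (k+1), Nat.mod_lt _ (by omega)⟩)
    (hdead : ∀ c : Fin (k+1), ∀ d ∈ D ∩ A c,
      ∀ v ∈ (A (c+1) \ D) \ Finset.univ.image x, ¬ H.Adj d v)
    (hU : ∀ c, ε * n ≤ (((A c \ D) \ Finset.univ.image x).card : ℝ)) :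
    ∀ c, ε * n ≤
      (((A c \ D) \ Finset.univ.image (Fin.snoc x u : Fin (i+1) → Fin (a*n))).card : ℝ) := by
  classical
  intro c
  set ci : Fin (k+1) := ⟨i % (k+1), Nat.mod_lt _ (by omega)⟩ with hci
  have huA : u ∈ A ci := by
    have := Finset.mem_sdiff.1 hu
    exact (Finset.mem_sdiff.1 this.1).1
  rw [image_snoc]
  by_cases hc : c = ci
  · subst hc
    by_contra hlt
    push_neg at hlt
    -- D ∩ A ci is small
    have hdisjoint : Disjoint ((A (ci+1) \ D) \ Finset.univ.image x) (D ∩ A ci) := by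
      refine Finset.disjoint_left.2 ?_
      intro v hv1 hv2
      have h1 : v ∈ A (ci+1) := (Finset.mem_sdiff.1 (Finset.mem_sdiff.1 hv1).1).1
      have h2 : v ∈ A ci := (Finset.mem_inter.1 hv2).2
      exact Finset.disjoint_left.1 (hdisj _ _ (fin_ne_add_one hk ci)) h1 h2
    have hDsmall : (((D ∩ A ci).card : ℕ) : ℝ) < ε * n :=
      small_side hjoin hdisjoint (hU (ci+1))
        (fun s hs t ht hadj => hdead ci t ht s hs hadj.symm)
    -- image count small
    have hcount : (Finset.univ.image (Fin.snoc x u : Fin (i+1) → Fin (a*n)) ∩ A ci).card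
        ≤ (n + k) / (k+1) :=
      count_bound k n (i+1) (by omega) (by omega) A hdisj _ hinj' hmem' ci
    -- decomposition
    have hdecomp : (A ci).card ≤
        ((A ci \ D) \ insert u (Finset.univ.image x)).card + ((D ∩ A ci).card
          + (Finset.univ.image (Fin.snoc x u : Fin (i+1) → Fin (a*n)) ∩ A ci).card) := by
      refine le_trans (Finset.card_le_card ?_) (le_trans (Finset.card_union_le _ _)
        (by gcongr; exact Finset.card_union_le _ _))
      intro v hv
      by_cases hvD : v ∈ D
      · exact Finset.mem_union.2 (Or.inr (Finset.mem_union.2 (Or.inl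
          (Finset.mem_inter.2 ⟨hvD, hv⟩))))
      by_cases hvR : v ∈ insert u (Finset.univ.image x)
      · refine Finset.mem_union.2 (Or.inr (Finset.mem_union.2 (Or.inr
          (Finset.mem_inter.2 ⟨?_, hv⟩))))
        rw [image_snoc]; exact hvR
      · exact Finset.mem_union.2 (Or.inl (Finset.mem_sdiff.2
          ⟨Finset.mem_sdiff.2 ⟨hv, hvD⟩, hvR⟩))
    have hM : (((n + k)/(k+1) : ℕ) : ℝ) ≤ 4 * (n:ℝ) / ((k:ℝ)+1) := by
      have h1 : (((n + k)/(k+1) : ℕ) : ℝ) ≤ ((n+k : ℕ) : ℝ) / ((k+1 : ℕ) : ℝ) :=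
        Nat.cast_div_le
      have hcast : ((n:ℝ)+(k:ℝ)) ≤ 4*(n:ℝ) := by
        have h2 : (k:ℝ) ≤ (n:ℝ) := by exact_mod_cast (by omega : k ≤ n)
        have hn0 : (0:ℝ) ≤ (n:ℝ) := by positivity
        linarith
      calc (((n + k)/(k+1) : ℕ) : ℝ) ≤ ((n:ℝ)+(k:ℝ))/((k:ℝ)+1) := by
            push_cast at h1 ⊢; linarith [h1]
      _ ≤ 4*(n:ℝ)/((k:ℝ)+1) := by gcongr
    have harith := arith_key hε (show (0:ℝ) < (k:ℝ)+1 by positivity) ha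
      (by positivity : (0:ℝ) ≤ (n:ℝ))
    have hAsz := hsize ci
    have hd : ((A ci).card:ℝ) ≤ (((A ci \ D) \ insert u (Finset.univ.image x)).card:ℝ)
        + (((D ∩ A ci).card:ℝ)
          + ((Finset.univ.image (Fin.snoc x u : Fin (i+1) → Fin (a*n)) ∩ A ci).card:ℝ)) := by
      exact_mod_cast hdecomp
    have hcount' : ((Finset.univ.image (Fin.snoc x u : Fin (i+1) → Fin (a*n)) ∩ A ci).card : ℝ)
        ≤ (((n+k)/(k+1):ℕ):ℝ) := by exact_mod_cast hcount
    linarith [hlt, hDsmall, hM, harith, hAsz, hd, hcount']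
  · have hEq : (A c \ D) \ insert u (Finset.univ.image x) = (A c \ D) \ Finset.univ.image x := by
      ext v
      simp only [Finset.mem_sdiff, Finset.mem_insert]
      constructor
      · rintro ⟨⟨h1, h2⟩, h3⟩
        exact ⟨⟨h1, h2⟩, fun hvR => h3 (Or.inr hvR)⟩
      · rintro ⟨⟨h1, h2⟩, h3⟩
        refine ⟨⟨h1, h2⟩, ?_⟩
        rintro (rfl | hvR)
        · exact Finset.disjoint_left.1 (hdisj _ _ hc) h1 huA
        · exact h3 hvR
    rw [hEq]
    exact hU c

lemma main_ind (k a n : ℕ) (hk : 1 ≤ k) (hn : 1 ≤ n) (ε : ℝ) (hε : 0 < ε)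
    (ha : 2 + 4 / (ε * (k + 1)) ≤ (a : ℝ))
    (H : SimpleGraph (Fin (a * n)))
    (hjoin : ∀ S T : Finset (Fin (a * n)), Disjoint S T →
      ε * n ≤ (S.card : ℝ) → ε * n ≤ (T.card : ℝ) → ∃ u ∈ S, ∃ v ∈ T, H.Adj u v)
    (A : Fin (k + 1) → Finset (Fin (a * n)))
    (hdisj : ∀ i j, i ≠ j → Disjoint (A i) (A j))
    (hsize : ∀ i, ε * a * n ≤ ((A i).card : ℝ)) :
    ∀ μ i : ℕ, ∀ hi : i ≤ n, ∀ x : Fin i → Fin (a * n), ∀ D : Finset (Fin (a * n)),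
    μ = 2 * (((Finset.univ \ D) \ Finset.univ.image x).card) + i →
    Function.Injective x →
    (∀ j : ℕ, ∀ h : j + 1 < i, H.Adj (x ⟨j, by omega⟩) (x ⟨j + 1, h⟩)) →
    (∀ j : Fin i, x j ∈ A ⟨(j : ℕ) % (k + 1), Nat.mod_lt _ (by omega)⟩) →
    (∀ j : Fin i, x j ∉ D) →
    (∀ c : Fin (k + 1), ∀ d ∈ D ∩ A c,
        ∀ u ∈ (A (c + 1) \ D) \ Finset.univ.image x, ¬ H.Adj d u) →
    ((k + 1 ≤ n ∧ ∀ c : Fin (k+1), ε * n ≤ (((A c \ D) \ Finset.univ.image x).card : ℝ)) ∨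
      (n ≤ k ∧ ∀ d ∈ D, d ∉ A ⟨n % (k + 1), Nat.mod_lt _ (by omega)⟩)) →
    ∃ y : Fin n → Fin (a * n), Function.Injective y ∧
      (∀ j : ℕ, ∀ h : j + 1 < n, H.Adj (y ⟨j, by omega⟩) (y ⟨j + 1, h⟩)) ∧
      (∀ j : Fin n, y j ∈ A ⟨(j : ℕ) % (k + 1), Nat.mod_lt _ (by omega)⟩) := by
  classical
  intro μ
  induction μ using Nat.strong_induction_on with
  | _ μ IH =>
  intro i hi x D hμ hinj hadj hmem hDx hdead hInv
  rcases eq_or_lt_of_le hi with hin | hilt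
  · subst hin
    exact ⟨x, hinj, hadj, hmem⟩
  have hn' : (0:ℝ) < (n:ℝ) := by exact_mod_cast hn
  have hεn : (0:ℝ) < ε * n := mul_pos hε hn'
  have hpos4 : (0:ℝ) < 4 / (ε * ((k:ℝ)+1)) := by positivity
  have ha2 : (2:ℝ) ≤ (a:ℝ) := by
    have := ha
    push_cast at this ⊢
    linarith
  by_cases hi0 : i = 0
  · subst hi0
    have hR0 : Finset.univ.image x = (∅ : Finset (Fin (a * n))) := by
      simp
    by_cases hne : ((A ⟨0 % (k+1), Nat.mod_lt _ (by omega)⟩ \ D) \ Finset.univ.image x).Nonempty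
    · -- PUSH at position 0
      obtain ⟨u, hu⟩ := hne
      have huA : u ∈ A ⟨0 % (k+1), Nat.mod_lt _ (by omega)⟩ :=
        (Finset.mem_sdiff.1 (Finset.mem_sdiff.1 hu).1).1
      have huD : u ∉ D := (Finset.mem_sdiff.1 (Finset.mem_sdiff.1 hu).1).2
      have huR : u ∉ Finset.univ.image x := (Finset.mem_sdiff.1 hu).2
      have himg : Finset.univ.image (Fin.snoc x u : Fin 1 → Fin (a*n))
          = insert u (Finset.univ.image x) := image_snoc 0 x u
      have hinj' : Function.Injective (Fin.snoc x u : Fin 1 → Fin (a*n)) :=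
        snoc_injective x u hinj (fun j => j.elim0)
      have hmem' : ∀ j : Fin 1, (Fin.snoc x u : Fin 1 → Fin (a*n)) j
          ∈ A ⟨(j:ℕ) % (k+1), Nat.mod_lt _ (by omega)⟩ := by
        intro j
        have hj : j = Fin.last 0 := Subsingleton.elim _ _
        rw [hj, Fin.snoc_last]
        exact huA
      have hunew : u ∈ (Finset.univ \ D) \ Finset.univ.image x :=
        Finset.mem_sdiff.2 ⟨Finset.mem_sdiff.2 ⟨Finset.mem_univ u, huD⟩, huR⟩
      have hcardeq : ((Finset.univ \ D) \ Finset.univ.image (Fin.snoc x u : Fin 1 → Fin (a*n))).card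
          = ((Finset.univ \ D) \ Finset.univ.image x).card - 1 := by
        rw [himg]
        have hers : (Finset.univ \ D) \ insert u (Finset.univ.image x)
            = ((Finset.univ \ D) \ Finset.univ.image x).erase u := by
          ext v
          simp only [Finset.mem_sdiff, Finset.mem_insert, Finset.mem_erase, Finset.mem_univ,
            true_and]
          tauto
        rw [hers, Finset.card_erase_of_mem hunew]
      have hposc : 1 ≤ ((Finset.univ \ D) \ Finset.univ.image x).card :=
        Finset.card_pos.2 ⟨u, hunew⟩
      refine IH (2 * (((Finset.univ \ D) \ Finset.univ.image (Fin.snoc x u : Fin 1 → Fin (a*n))).card) + 1)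
        (by omega) 1 (by omega) (Fin.snoc x u) D rfl hinj' ?_ hmem' ?_ ?_ ?_
      · intro j h
        exact absurd h (by omega)
      · intro j
        have hj : j = Fin.last 0 := Subsingleton.elim _ _
        rw [hj, Fin.snoc_last]
        exact huD
      · intro c d hd v hv
        refine hdead c d hd v ?_
        rw [himg] at hv
        rcases Finset.mem_sdiff.1 hv with ⟨h1, h2⟩
        exact Finset.mem_sdiff.2 ⟨h1, fun hc2 => h2 (Finset.mem_insert_of_mem hc2)⟩
      · rcases hInv with ⟨hkn, hU⟩ | ⟨hnk, hDn⟩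
        · exact Or.inl ⟨hkn, push_keepU k a n hk ε hε ha H hjoin A hdisj hsize hkn 0
            (by omega) x D u hu hinj' hmem' hdead hU⟩
        · exact Or.inr ⟨hnk, hDn⟩
    · -- STUCK at position 0
      exfalso
      rcases hInv with ⟨hkn, hU⟩ | ⟨hnk, hDn⟩
      · have h1 := hU ⟨0 % (k+1), Nat.mod_lt _ (by omega)⟩
        rw [Finset.not_nonempty_iff_eq_empty.1 hne] at h1
        simp at h1
        linarith
      · -- propagation
        have hsub : A ⟨0 % (k+1), Nat.mod_lt _ (by omega)⟩ ⊆ D := by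
          intro v hv
          by_contra hvD
          exact hne ⟨v, Finset.mem_sdiff.2 ⟨Finset.mem_sdiff.2 ⟨hv, hvD⟩,
            by rw [hR0]; exact Finset.notMem_empty v⟩⟩
        have key : ∀ c : ℕ, c ≤ n →
            ε * n ≤ (((A ⟨c % (k+1), Nat.mod_lt _ (by omega)⟩) ∩ D).card : ℝ) := by
          intro c
          induction c with
          | zero =>
            intro _
            have he : A ⟨0 % (k+1), Nat.mod_lt _ (by omega)⟩ ∩ D
                = A ⟨0 % (k+1), Nat.mod_lt _ (by omega)⟩ := Finset.inter_eq_left.2 hsub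
            rw [he]
            have := hsize ⟨0 % (k+1), Nat.mod_lt _ (by omega)⟩
            nlinarith
          | succ c ihc =>
            intro hcn
            have hc := ihc (by omega)
            have hnoadj : ∀ s ∈ A ⟨c % (k+1), Nat.mod_lt _ (by omega)⟩ ∩ D,
                ∀ t ∈ A ⟨(c+1) % (k+1), Nat.mod_lt _ (by omega)⟩ \ D, ¬ H.Adj s t := by
              intro s hs t ht
              have hs2 : s ∈ D ∩ A ⟨c % (k+1), Nat.mod_lt _ (by omega)⟩ := by
                rw [Finset.inter_comm]; exact hs
              have ht2 : t ∈ (A (⟨c % (k+1), Nat.mod_lt _ (by omega)⟩ + 1) \ D)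
                  \ Finset.univ.image x := by
                rw [fin_mk_add_one]
                exact Finset.mem_sdiff.2 ⟨ht, by rw [hR0]; exact Finset.notMem_empty t⟩
              exact hdead _ s hs2 t ht2
            have hy1 : c % (k+1) = c := Nat.mod_eq_of_lt (by omega)
            have hy2 : (c+1) % (k+1) = c+1 := Nat.mod_eq_of_lt (by omega)
            have hdisj2 : Disjoint (A ⟨c % (k+1), Nat.mod_lt _ (by omega)⟩ ∩ D)
                (A ⟨(c+1) % (k+1), Nat.mod_lt _ (by omega)⟩ \ D) := by
              refine Finset.disjoint_of_subset_left Finset.inter_subset_left ?_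
              refine Finset.disjoint_of_subset_right Finset.sdiff_subset ?_
              refine hdisj _ _ ?_
              intro he
              have hv : c % (k+1) = (c+1) % (k+1) := congrArg Fin.val he
              omega
            have hsmall := small_side hjoin hdisj2 hc hnoadj
            have hcards := Finset.card_inter_add_card_sdiff
              (A ⟨(c+1) % (k+1), Nat.mod_lt _ (by omega)⟩) D
            have hsz := hsize ⟨(c+1) % (k+1), Nat.mod_lt _ (by omega)⟩
            have hcast : ((A ⟨(c+1) % (k+1), Nat.mod_lt _ (by omega)⟩ ∩ D).card : ℝ)
                + ((A ⟨(c+1) % (k+1), Nat.mod_lt _ (by omega)⟩ \ D).card : ℝ)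
                = ((A ⟨(c+1) % (k+1), Nat.mod_lt _ (by omega)⟩).card : ℝ) := by
              exact_mod_cast hcards
            nlinarith
        have hfin := key n le_rfl
        have hempty : A ⟨n % (k+1), Nat.mod_lt _ (by omega)⟩ ∩ D = ∅ := by
          apply Finset.eq_empty_of_forall_notMem
          intro v hv
          exact hDn v (Finset.mem_inter.1 hv).2 (Finset.mem_inter.1 hv).1
        rw [hempty] at hfin
        simp at hfin
        linarith
  · -- i = i' + 1
    obtain ⟨i', rfl⟩ := Nat.exists_eq_succ_of_ne_zero hi0
    have hwmem : x (Fin.last i') ∈ A ⟨i' % (k+1), Nat.mod_lt _ (by omega)⟩ :=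
      hmem (Fin.last i')
    have hwI : x (Fin.last i') ∈ Finset.univ.image x :=
      Finset.mem_image.2 ⟨Fin.last i', Finset.mem_univ _, rfl⟩
    by_cases hne : (((A ⟨(i'+1) % (k+1), Nat.mod_lt _ (by omega)⟩ \ D) \ Finset.univ.image x).filter
        (fun v => H.Adj (x (Fin.last i')) v)).Nonempty
    · -- PUSH
      obtain ⟨u, hu0⟩ := hne
      rw [Finset.mem_filter] at hu0
      obtain ⟨hu, hadju⟩ := hu0
      have huA : u ∈ A ⟨(i'+1) % (k+1), Nat.mod_lt _ (by omega)⟩ :=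
        (Finset.mem_sdiff.1 (Finset.mem_sdiff.1 hu).1).1
      have huD : u ∉ D := (Finset.mem_sdiff.1 (Finset.mem_sdiff.1 hu).1).2
      have huR : u ∉ Finset.univ.image x := (Finset.mem_sdiff.1 hu).2
      have himg : Finset.univ.image (Fin.snoc x u : Fin (i'+2) → Fin (a*n))
          = insert u (Finset.univ.image x) := image_snoc (i'+1) x u
      have hinj' : Function.Injective (Fin.snoc x u : Fin (i'+2) → Fin (a*n)) :=
        snoc_injective x u hinj
          (fun j hxj => huR (Finset.mem_image.2 ⟨j, Finset.mem_univ j, hxj⟩))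
      have hmem' : ∀ j : Fin (i'+2), (Fin.snoc x u : Fin (i'+2) → Fin (a*n)) j
          ∈ A ⟨(j:ℕ) % (k+1), Nat.mod_lt _ (by omega)⟩ := by
        intro j
        rcases Fin.eq_castSucc_or_eq_last j with ⟨j', rfl⟩ | rfl
        · rw [Fin.snoc_castSucc]
          exact hmem j'
        · rw [Fin.snoc_last]
          exact huA
      have hunew : u ∈ (Finset.univ \ D) \ Finset.univ.image x :=
        Finset.mem_sdiff.2 ⟨Finset.mem_sdiff.2 ⟨Finset.mem_univ u, huD⟩, huR⟩
      have hcardeq :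
          ((Finset.univ \ D) \ Finset.univ.image (Fin.snoc x u : Fin (i'+2) → Fin (a*n))).card
          = ((Finset.univ \ D) \ Finset.univ.image x).card - 1 := by
        rw [himg]
        have hers : (Finset.univ \ D) \ insert u (Finset.univ.image x)
            = ((Finset.univ \ D) \ Finset.univ.image x).erase u := by
          ext v
          simp only [Finset.mem_sdiff, Finset.mem_insert, Finset.mem_erase, Finset.mem_univ,
            true_and]
          tauto
        rw [hers, Finset.card_erase_of_mem hunew]
      have hposc : 1 ≤ ((Finset.univ \ D) \ Finset.univ.image x).card :=
        Finset.card_pos.2 ⟨u, hunew⟩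
      refine IH (2 * (((Finset.univ \ D) \
          Finset.univ.image (Fin.snoc x u : Fin (i'+2) → Fin (a*n))).card) + (i'+2))
        (by omega) (i'+2) (by omega) (Fin.snoc x u) D rfl hinj' ?_ hmem' ?_ ?_ ?_
      · -- adjacency
        intro j h
        rcases Nat.lt_or_ge (j+1) (i'+1) with hlt2 | hge2
        · rw [snoc_mk_lt x u j (by omega) (by omega), snoc_mk_lt x u (j+1) hlt2 h]
          exact hadj j hlt2
        · have hj : j = i' := by omega
          subst hj
          rw [snoc_mk_lt x u j (by omega) (by omega), snoc_mk_last x u h]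
          exact hadju
      · intro j
        rcases Fin.eq_castSucc_or_eq_last j with ⟨j', rfl⟩ | rfl
        · rw [Fin.snoc_castSucc]; exact hDx j'
        · rw [Fin.snoc_last]; exact huD
      · intro c d hd v hv
        refine hdead c d hd v ?_
        rw [himg] at hv
        rcases Finset.mem_sdiff.1 hv with ⟨h1, h2⟩
        exact Finset.mem_sdiff.2 ⟨h1, fun hc2 => h2 (Finset.mem_insert_of_mem hc2)⟩
      · rcases hInv with ⟨hkn, hU⟩ | ⟨hnk, hDn⟩
        · exact Or.inl ⟨hkn, push_keepU k a n hk ε hε ha H hjoin A hdisj hsize hkn (i'+1)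
            (by omega) x D u hu hinj' hmem' hdead hU⟩
        · exact Or.inr ⟨hnk, hDn⟩
    · -- POP
      have himg2 : Finset.univ.image x
          = insert (x (Fin.last i'))
            (Finset.univ.image (fun j : Fin i' => x j.castSucc)) := image_last i' x
      have hsubimg : ∀ v, v ∈ Finset.univ.image (fun j : Fin i' => x j.castSucc) →
          v ∈ Finset.univ.image x := by
        intro v hv
        rcases Finset.mem_image.1 hv with ⟨j, _, hj⟩
        exact Finset.mem_image.2 ⟨j.castSucc, Finset.mem_univ _, hj⟩
      have hinj'' : Function.Injective (fun j : Fin i' => x j.castSucc) :=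
        fun p q hpq => Fin.castSucc_injective _ (hinj hpq)
      have hEqc : ∀ B : Finset (Fin (a*n)),
          (B \ insert (x (Fin.last i')) D) \ Finset.univ.image (fun j : Fin i' => x j.castSucc)
          = (B \ D) \ Finset.univ.image x := by
        intro B
        ext v
        simp only [Finset.mem_sdiff, Finset.mem_insert, not_or]
        constructor
        · rintro ⟨⟨hvB, hvw, hvD⟩, hvI⟩
          refine ⟨⟨hvB, hvD⟩, ?_⟩
          rw [himg2]
          simp only [Finset.mem_insert, not_or]
          exact ⟨hvw, hvI⟩
        · rintro ⟨⟨hvB, hvD⟩, hvI⟩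
          have hvw : v ≠ x (Fin.last i') := by
            intro hvw
            exact hvI (hvw ▸ hwI)
          exact ⟨⟨hvB, hvw, hvD⟩, fun hc2 => hvI (hsubimg v hc2)⟩
      have hcard2 :
          ((Finset.univ \ insert (x (Fin.last i')) D) \
            Finset.univ.image (fun j : Fin i' => x j.castSucc)).card
          = ((Finset.univ \ D) \ Finset.univ.image x).card := by
        rw [hEqc]
      refine IH (2 * (((Finset.univ \ insert (x (Fin.last i')) D) \
          Finset.univ.image (fun j : Fin i' => x j.castSucc)).card) + i')
        (by omega) i' (by omega) (fun j : Fin i' => x j.castSucc)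
        (insert (x (Fin.last i')) D) rfl hinj'' ?_ ?_ ?_ ?_ ?_
      · -- adjacency
        intro j h
        exact hadj j (by omega)
      · -- membership
        intro j
        exact hmem j.castSucc
      · -- not dead
        intro j hjD
        rcases Finset.mem_insert.1 hjD with he | hd
        · exact (Fin.castSucc_lt_last j).ne (hinj he)
        · exact hDx j.castSucc hd
      · -- dead condition
        intro c d hd v hv
        rcases Finset.mem_inter.1 hd with ⟨hdD', hdA⟩
        rcases Finset.mem_sdiff.1 hv with ⟨hv1, hvI''⟩
        rcases Finset.mem_sdiff.1 hv1 with ⟨hvA, hvD'⟩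
        have hvD : v ∉ D := fun h2 => hvD' (Finset.mem_insert_of_mem h2)
        have hvw : v ≠ x (Fin.last i') := by
          intro h2
          exact hvD' (h2 ▸ Finset.mem_insert_self _ _)
        have hvI : v ∉ Finset.univ.image x := by
          rw [himg2]
          simp only [Finset.mem_insert, not_or]
          exact ⟨hvw, hvI''⟩
        rcases Finset.mem_insert.1 hdD' with hdw | hdD
        · -- d is the newly popped vertex
          subst hdw
          have hcc : c = ⟨i' % (k+1), Nat.mod_lt _ (by omega)⟩ := by
            by_contra hcc
            exact Finset.disjoint_left.1 (hdisj _ _ hcc) hdA hwmem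
          subst hcc
          rw [fin_mk_add_one] at hvA
          intro hadj2
          exact hne ⟨v, Finset.mem_filter.2 ⟨Finset.mem_sdiff.2
            ⟨Finset.mem_sdiff.2 ⟨hvA, hvD⟩, hvI⟩, hadj2⟩⟩
        · exact hdead c d (Finset.mem_inter.2 ⟨hdD, hdA⟩) v
            (Finset.mem_sdiff.2 ⟨Finset.mem_sdiff.2 ⟨hvA, hvD⟩, hvI⟩)
      · -- invariant
        rcases hInv with ⟨hkn, hU⟩ | ⟨hnk, hDn⟩
        · refine Or.inl ⟨hkn, fun c => ?_⟩
          rw [hEqc]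
          exact hU c
        · refine Or.inr ⟨hnk, fun d hd => ?_⟩
          rcases Finset.mem_insert.1 hd with hdw | hdD
          · subst hdw
            intro hwn
            refine Finset.disjoint_left.1
              (hdisj ⟨i' % (k+1), Nat.mod_lt _ (by omega)⟩
                ⟨n % (k+1), Nat.mod_lt _ (by omega)⟩ ?_) hwmem hwn
            intro he
            have hv : i' % (k+1) = n % (k+1) := congrArg Fin.val he
            have hy1 : i' % (k+1) = i' := Nat.mod_eq_of_lt (by omega)
            have hy2 : n % (k+1) = n := Nat.mod_eq_of_lt (by omega)
            omega
          · exact hDn d hdD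

theorem stmt_8' (k a n : ℕ) (hk : 1 ≤ k) (ε : ℝ) (hε : 0 < ε)
    (ha : 2 + 4 / (ε * (k + 1)) ≤ (a : ℝ))
    (H : SimpleGraph (Fin (a * n)))
    (hjoin : ∀ S T : Finset (Fin (a * n)), Disjoint S T →
      ε * n ≤ (S.card : ℝ) → ε * n ≤ (T.card : ℝ) → ∃ u ∈ S, ∃ v ∈ T, H.Adj u v)
    (A : Fin (k + 1) → Finset (Fin (a * n)))
    (hdisj : ∀ i j, i ≠ j → Disjoint (A i) (A j))
    (hsize : ∀ i, ε * a * n ≤ ((A i).card : ℝ)) :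
    ∃ x : Fin n → Fin (a * n), Function.Injective x ∧
      (∀ i : ℕ, ∀ h : i + 1 < n, H.Adj (x ⟨i, Nat.lt_of_succ_lt h⟩) (x ⟨i + 1, h⟩)) ∧
      (∀ i : Fin n, x i ∈ A ⟨(i : ℕ) % (k + 1), Nat.mod_lt _ (Nat.succ_pos k)⟩) := by
  classical
  rcases Nat.eq_zero_or_pos n with rfl | hn
  · refine ⟨fun j => j.elim0, fun p q h => p.elim0, ?_, fun j => j.elim0⟩
    intro j h
    exact absurd h (by omega)
  have hn' : (0:ℝ) < (n:ℝ) := by exact_mod_cast hn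
  have hpos4 : (0:ℝ) < 4 / (ε * ((k:ℝ)+1)) := by positivity
  have ha2 : (2:ℝ) ≤ (a:ℝ) := by push_cast at ha ⊢; linarith
  have hεan : ε * n ≤ ε * a * n := by
    have h9 : (0:ℝ) ≤ (ε*n)*((a:ℝ)-1) := mul_nonneg (mul_pos hε hn').le (by linarith)
    nlinarith [h9]
  refine main_ind k a n hk hn ε hε ha H hjoin A hdisj hsize
    (2 * (((Finset.univ \ (∅ : Finset (Fin (a*n)))) \
      Finset.univ.image (Fin.elim0 : Fin 0 → Fin (a*n))).card) + 0)
    0 (by omega) Fin.elim0 ∅ rfl (fun p q h => p.elim0) ?_ (fun j => j.elim0)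
    (fun j => j.elim0) ?_ ?_
  · intro j h
    exact absurd h (by omega)
  · intro c d hd u hu
    simp at hd
  · by_cases hkn : k + 1 ≤ n
    · refine Or.inl ⟨hkn, fun c => ?_⟩
      have himg0 : Finset.univ.image (Fin.elim0 : Fin 0 → Fin (a*n)) = ∅ := by simp
      rw [himg0]
      simp only [Finset.sdiff_empty]
      exact le_trans hεan (hsize c)
    · exact Or.inr ⟨by omega, fun d hd => absurd hd (Finset.notMem_empty d)⟩

end Stmt8Aux

/-- Lemma 3.2: a path on `n` vertices running cyclically through the
disjoint sets `A₁, …, A_{k+1}`. -/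
theorem stmt_8 (k a n : ℕ) (hk : 1 ≤ k) (ε : ℝ) (hε : 0 < ε)
    (ha : 2 + 4 / (ε * (k + 1)) ≤ (a : ℝ))
    (H : SimpleGraph (Fin (a * n)))
    (hjoin : ∀ S T : Finset (Fin (a * n)), Disjoint S T →
      ε * n ≤ (S.card : ℝ) → ε * n ≤ (T.card : ℝ) → ∃ u ∈ S, ∃ v ∈ T, H.Adj u v)
    (A : Fin (k + 1) → Finset (Fin (a * n)))
    (hdisj : ∀ i j, i ≠ j → Disjoint (A i) (A j))
    (hsize : ∀ i, ε * a * n ≤ ((A i).card : ℝ)) :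
    ∃ x : Fin n → Fin (a * n), Function.Injective x ∧
      (∀ i : ℕ, ∀ h : i + 1 < n, H.Adj (x ⟨i, by omega⟩) (x ⟨i + 1, h⟩)) ∧
      (∀ i : Fin n, x i ∈ A ⟨(i : ℕ) % (k + 1), Nat.mod_lt _ (by omega)⟩) := by
  exact stmt_8' k a n hk ε hε ha H hjoin A hdisj hsize
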